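/- For the cycle C_n with n ≥ 4: if n is odd then the upper monitoring arc-geodetic number of C_n equals n−1, and if n is even then it equals n. Moreover, mag^+(C_3) = 3 and mag^-(C_n) = 2 for all n ≥ 3. -/

import Mathlib

namespace MAG

open Fin.NatCast Fin.CommRing

variable {V : Type*}

/-- Directed walk from `x` to `y` whose list of visited vertices is `l`. -/
inductive DWalk (A : V → V → Prop) : V → V → List V → Prop
  | nil (v : V) : DWalk A v v [v]
  | cons {u v w : V} {l : List V} (h : A u v) (p : DWalk A v w l) :
      DWalk A u w (u :: l)

/-- The arc `(a, b)` lies on the walk with vertex list `l`. -/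
def ArcOn (a b : V) (l : List V) : Prop :=
  ∃ l₁ l₂ : List V, l = l₁ ++ a :: b :: l₂

/-- `l` is (the vertex list of) a shortest directed walk from `x` to `y`. -/
def IsShortest (A : V → V → Prop) (x y : V) (l : List V) : Prop :=
  DWalk A x y l ∧ ∀ l' : List V, DWalk A x y l' → l.length ≤ l'.length

/-- `x` and `y` monitor the arc `(a, b)`: the arc lies on every shortest
directed path from `x` to `y` (and such a path exists), or symmetrically
from `y` to `x`. -/
def Monitors (A : V → V → Prop) (x y a b : V) : Prop :=
  ((∃ l, IsShortest A x y l) ∧ ∀ l, IsShortest A x y l → ArcOn a b l) ∨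
  ((∃ l, IsShortest A y x l) ∧ ∀ l, IsShortest A y x l → ArcOn a b l)

/-- A monitoring arc-geodetic set of the digraph `A`. -/
def IsMAGSet (A : V → V → Prop) (M : Set V) : Prop :=
  ∀ a b : V, A a b → ∃ x ∈ M, ∃ y ∈ M, x ≠ y ∧ Monitors A x y a b

/-- The monitoring arc-geodetic number of the digraph `A`. -/
noncomputable def mag (A : V → V → Prop) [Fintype V] : ℕ :=
  sInf {n | ∃ M : Finset V, IsMAGSet A (M : Set V) ∧ M.card = n}

/-- `A` is an orientation of the undirected simple graph `G`. -/
structure IsOrientation (G : SimpleGraph V) (A : V → V → Prop) : Prop where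
  adj_iff : ∀ u v : V, G.Adj u v ↔ (A u v ∨ A v u)
  asymm : ∀ u v : V, A u v → ¬ A v u

/-- The lower monitoring arc-geodetic number of `G`. -/
noncomputable def magMinus (G : SimpleGraph V) [Fintype V] : ℕ :=
  sInf {n | ∃ A : V → V → Prop, IsOrientation G A ∧ mag A = n}

/-- The upper monitoring arc-geodetic number of `G`. -/
noncomputable def magPlus (G : SimpleGraph V) [Fintype V] : ℕ :=
  sSup {n | ∃ A : V → V → Prop, IsOrientation G A ∧ mag A = n}

/-- A source: a vertex with no in-neighbours. -/
def IsSource (A : V → V → Prop) (v : V) : Prop := ∀ w, ¬ A w v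

/-- A sink: a vertex with no out-neighbours. -/
def IsSink (A : V → V → Prop) (v : V) : Prop := ∀ w, ¬ A v w

/-- An oriented graph: no loops and no pair of opposite arcs. -/
def IsOrientedGraph (A : V → V → Prop) : Prop :=
  (∀ v, ¬ A v v) ∧ ∀ u v : V, A u v → ¬ A v u

/-- The underlying undirected graph of `A` is connected. -/
def IsConnectedDigraph (A : V → V → Prop) : Prop :=
  ∀ x y : V, Relation.ReflTransGen (fun a b => A a b ∨ A b a) x y


variable {A : V → V → Prop}

/-! ### Generic lemmas -/

variable {A : V → V → Prop}

lemma IsOrientation.ne {G : SimpleGraph V} (hA : IsOrientation G A) {u v : V}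
    (h : A u v) : u ≠ v := fun e => hA.asymm u v h (e ▸ h)

lemma DWalk.cases' {x y : V} {l : List V} (h : DWalk A x y l) :
    (x = y ∧ l = [x]) ∨ ∃ w l', A x w ∧ DWalk A w y l' ∧ l = x :: l' := by
  cases h with
  | nil => exact Or.inl ⟨rfl, rfl⟩
  | cons h p => exact Or.inr ⟨_, _, h, p, rfl⟩

lemma DWalk.one_le_length {x y : V} {l : List V} (h : DWalk A x y l) :
    1 ≤ l.length := by cases h <;> simp

lemma DWalk.two_le_length {x y : V} {l : List V} (h : DWalk A x y l) (hxy : x ≠ y) :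
    2 ≤ l.length := by
  rcases h.cases' with ⟨e, _⟩ | ⟨w, l', _, p, rfl⟩
  · exact absurd e hxy
  · have := p.one_le_length; simp; omega

lemma dwalk_length_two {x y : V} {l : List V} (h : DWalk A x y l)
    (hl : l.length = 2) : l = [x, y] ∧ A x y := by
  rcases h.cases' with ⟨rfl, rfl⟩ | ⟨w, l', ha, p, rfl⟩
  · simp at hl
  · rcases p.cases' with ⟨rfl, rfl⟩ | ⟨w', l'', _, p', rfl⟩
    · exact ⟨rfl, ha⟩
    · have := p'.one_le_length
      simp only [List.length_cons] at hl
      omega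

lemma dwalk_length_three {x y : V} {l : List V} (h : DWalk A x y l)
    (hl : l.length = 3) : ∃ w, l = [x, w, y] ∧ A x w ∧ A w y := by
  rcases h.cases' with ⟨rfl, rfl⟩ | ⟨w, l', ha, p, rfl⟩
  · simp at hl
  · have : l'.length = 2 := by simp at hl; omega
    obtain ⟨rfl, hwy⟩ := dwalk_length_two p this
    exact ⟨w, rfl, ha, hwy⟩

lemma not_arcOn_singleton {a b v : V} : ¬ ArcOn a b [v] := by
  rintro ⟨l₁, l₂, h⟩
  have := congrArg List.length h
  simp at this; omega

lemma arcOn_pair {a b u v : V} (h : ArcOn a b [u, v]) : a = u ∧ b = v := by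
  obtain ⟨l₁, l₂, h⟩ := h
  have hlen := congrArg List.length h
  simp at hlen
  have h1 : l₁ = [] := by
    cases l₁ with
    | nil => rfl
    | cons c t => simp at hlen; omega
  have h2 : l₂ = [] := by
    cases l₂ with
    | nil => rfl
    | cons c t => simp [h1] at hlen
  subst h1 h2
  simp at h
  exact ⟨h.1.symm, h.2.symm⟩

lemma arcOn_triple {a b u v w : V} (h : ArcOn a b [u, v, w]) :
    (a = u ∧ b = v) ∨ (a = v ∧ b = w) := by
  obtain ⟨l₁, l₂, h⟩ := h
  have hlen := congrArg List.length h
  simp at hlen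
  match l₁ with
  | [] => simp at h; exact Or.inl ⟨h.1.symm, h.2.1.symm⟩
  | [c] =>
    have h2 : l₂ = [] := by
      cases l₂ with
      | nil => rfl
      | cons c' t => simp at hlen; omega
    subst h2
    simp at h
    exact Or.inr ⟨h.2.1.symm, h.2.2.symm⟩
  | c :: c' :: t => simp at hlen; omega

/-- `[u, v]` is the unique shortest walk from `u` to `v` when `A u v`. -/
lemma isShortest_pair {u v : V} (ha : A u v) (hne : u ≠ v) :
    IsShortest A u v [u, v] := by
  refine ⟨.cons ha (.nil v), fun l' hl' => hl'.two_le_length hne⟩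

lemma isShortest_pair_unique {u v : V} (hne : u ≠ v) {l : List V}
    (h : IsShortest A u v l) (hl : l.length ≤ 2) : l = [u, v] := by
  have h2 : l.length = 2 := le_antisymm hl (h.1.two_le_length hne)
  exact (dwalk_length_two h.1 h2).1

lemma monitors_self {u v : V} (ha : A u v) (hne : u ≠ v) :
    Monitors A u v u v := by
  left
  refine ⟨⟨[u, v], isShortest_pair ha hne⟩, fun l hl => ?_⟩
  have := isShortest_pair_unique hne hl (hl.2 _ (isShortest_pair ha hne).1)
  rw [this]
  exact ⟨[], [], rfl⟩

lemma isMAGSet_univ (h : ∀ u v, A u v → u ≠ v) : IsMAGSet A Set.univ :=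
  fun a b hab =>
    ⟨a, trivial, b, trivial, h a b hab, monitors_self hab (h a b hab)⟩

lemma mag_le_card [Fintype V] (h : ∀ u v, A u v → u ≠ v) :
    mag A ≤ Fintype.card V :=
  Nat.sInf_le ⟨Finset.univ, by simpa using isMAGSet_univ h, Finset.card_univ⟩

lemma magSet_nonempty [Fintype V] (h : ∀ u v, A u v → u ≠ v) :
    {n | ∃ M : Finset V, IsMAGSet A (M : Set V) ∧ M.card = n}.Nonempty :=
  ⟨Fintype.card V, Finset.univ, by simpa using isMAGSet_univ h, Finset.card_univ⟩

lemma two_le_of_isMAGSet [Fintype V] {M : Finset V}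
    (hM : IsMAGSet A (M : Set V)) (hex : ∃ a b, A a b) : 2 ≤ M.card := by
  obtain ⟨a, b, hab⟩ := hex
  obtain ⟨x, hx, y, hy, hxy, -⟩ := hM a b hab
  exact Finset.one_lt_card.mpr ⟨x, hx, y, hy, hxy⟩

lemma two_le_mag [Fintype V] (h : ∀ u v, A u v → u ≠ v)
    (hex : ∃ a b, A a b) : 2 ≤ mag A := by
  refine le_csInf (magSet_nonempty h) ?_
  rintro k ⟨M, hM, rfl⟩
  exact two_le_of_isMAGSet hM hex

/-- Classification of monitoring pairs from a classification of shortest walks. -/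
lemma monitors_cases {x y a b : V}
    (H : ∀ p q : V,
      ((∃ l, IsShortest A p q l) ∧ ∀ l, IsShortest A p q l → ArcOn a b l) →
        p = a ∧ q = b)
    (h : Monitors A x y a b) : (x = a ∧ y = b) ∨ (x = b ∧ y = a) := by
  rcases h with h | h
  · exact Or.inl (H _ _ h)
  · obtain ⟨h1, h2⟩ := H _ _ h
    exact Or.inr ⟨h2, h1⟩


/-! ### Walk classification in sink-like digraphs -/

/-- If every arc head is a sink, walks are trivial or single arcs. -/
lemma dwalk_sink (hs : ∀ u v, A u v → IsSink A v) {x y : V} {l : List V}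
    (h : DWalk A x y l) : (x = y ∧ l = [x]) ∨ (A x y ∧ l = [x, y]) := by
  rcases h.cases' with ⟨rfl, rfl⟩ | ⟨w, l', ha, p, rfl⟩
  · exact Or.inl ⟨rfl, rfl⟩
  · rcases p.cases' with ⟨rfl, rfl⟩ | ⟨w', l'', ha', p', rfl⟩
    · exact Or.inr ⟨ha, rfl⟩
    · exact absurd ha' (hs _ _ ha w')

/-- Walk classification when every arc head is a sink except one vertex `s`,
from which the only arc goes to the sink `t`. -/
lemma dwalk_almost_sink {s t : V}
    (hs : ∀ u v, A u v → v = s ∨ IsSink A v)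
    (hst : ∀ v, A s v → v = t) (ht : IsSink A t)
    {x y : V} {l : List V} (h : DWalk A x y l) :
    (x = y ∧ l = [x]) ∨ (A x y ∧ l = [x, y]) ∨
      (A x s ∧ y = t ∧ l = [x, s, t]) := by
  rcases h.cases' with ⟨rfl, rfl⟩ | ⟨w, l', ha, p, rfl⟩
  · exact Or.inl ⟨rfl, rfl⟩
  · rcases p.cases' with ⟨rfl, rfl⟩ | ⟨w', l'', ha', p', rfl⟩
    · exact Or.inr (Or.inl ⟨ha, rfl⟩)
    · rcases hs _ _ ha with rfl | hsink
      · have hwt : w' = t := hst _ ha'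
        subst hwt
        rcases p'.cases' with ⟨rfl, rfl⟩ | ⟨w'', l''', ha'', _, rfl⟩
        · exact Or.inr (Or.inr ⟨ha, rfl, rfl⟩)
        · exact absurd ha'' (ht w'')
      · exact absurd ha' (hsink w')

/-- In a sink digraph, a pair monitoring arc `(a,b)` must be `{a,b}`. -/
lemma monitors_eq_of_sink (hs : ∀ u v, A u v → IsSink A v) {x y a b : V}
    (h : Monitors A x y a b) : (x = a ∧ y = b) ∨ (x = b ∧ y = a) := by
  refine monitors_cases (fun p q hpq => ?_) h
  obtain ⟨⟨l, hl⟩, hall⟩ := hpq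
  have harc := hall l hl
  rcases dwalk_sink hs hl.1 with ⟨rfl, rfl⟩ | ⟨ha, rfl⟩
  · exact absurd harc not_arcOn_singleton
  · obtain ⟨rfl, rfl⟩ := arcOn_pair harc
    exact ⟨rfl, rfl⟩

/-! ### Walks in functional digraphs -/

lemma dwalk_iterate (f : V → V) (x : V) (k : ℕ) :
    DWalk (fun u v => v = f u) x (f^[k] x)
      ((List.range (k + 1)).map (fun t => f^[t] x)) := by
  induction k generalizing x with
  | zero => simpa using DWalk.nil x
  | succ k ih =>
    have h := DWalk.cons (u := x) (rfl : f x = f x) (ih (f x))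
    have he : (List.range (k + 1 + 1)).map (fun t => f^[t] x) =
        x :: (List.range (k + 1)).map (fun t => f^[t] (f x)) := by
      rw [List.range_succ_eq_map, List.map_cons, List.map_map]
      have hfe : ((fun t => f^[t] x) ∘ Nat.succ) = fun t => f^[t] (f x) := by
        funext t
        simp [Function.iterate_succ_apply]
      rw [hfe]
      simp
    rw [he]
    have he2 : f^[k + 1] x = f^[k] (f x) := Function.iterate_succ_apply f k x
    rw [he2]
    exact h

lemma dwalk_fun_inv {f : V → V} {x y : V} {l : List V}
    (h : DWalk (fun u v => v = f u) x y l) :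
    ∃ k, y = f^[k] x ∧ l = (List.range (k + 1)).map (fun t => f^[t] x) := by
  induction h with
  | nil v => exact ⟨0, by simp⟩
  | cons ha p ih =>
    rename_i u v w lw
    obtain ⟨k, hy, hl⟩ := ih
    subst ha
    refine ⟨k + 1, by rw [hy, Function.iterate_succ_apply], ?_⟩
    rw [hl]
    conv_rhs => rw [List.range_succ_eq_map, List.map_cons, List.map_map]
    have hfe : ((fun t => f^[t] u) ∘ Nat.succ) = fun t => f^[t] (f u) := by
      funext t
      simp [Function.iterate_succ_apply]
    rw [hfe]
    simp

/-! ### ArcOn for mapped ranges -/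

lemma arcOn_map_range {g : ℕ → V} {a b : V} {m : ℕ} :
    ArcOn a b ((List.range m).map g) ↔
      ∃ t, t + 2 ≤ m ∧ g t = a ∧ g (t + 1) = b := by
  constructor
  · rintro ⟨l₁, l₂, h⟩
    have hlen := congrArg List.length h
    simp only [List.length_map, List.length_range, List.length_append,
      List.length_cons] at hlen
    set t := l₁.length with ht
    refine ⟨t, by omega, ?_, ?_⟩
    · have h1 : ((List.range m).map g)[t]'(by simp; omega) = g t := by
        simp
      have h2 : ((List.range m).map g)[t]'(by simp; omega) = a := by
        rw [List.getElem_of_eq h]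
        rw [List.getElem_append_right (le_refl t)]
        simp [ht]
      rw [← h1, h2]
    · have h1 : ((List.range m).map g)[t + 1]'(by simp; omega) = g (t + 1) := by
        simp
      have h2 : ((List.range m).map g)[t + 1]'(by simp; omega) = b := by
        rw [List.getElem_of_eq h]
        rw [List.getElem_append_right (by omega : l₁.length ≤ t + 1)]
        simp [ht]
      rw [← h1, h2]
  · rintro ⟨t, htm, rfl, rfl⟩
    set l := (List.range m).map g with hl
    have hlen : l.length = m := by simp [hl]
    refine ⟨l.take t, l.drop (t + 2), ?_⟩
    have hd1 : l.drop t = l[t]'(by omega) :: l.drop (t + 1) :=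
      List.drop_eq_getElem_cons (by omega)
    have hd2 : l.drop (t + 1) = l[t + 1]'(by omega) :: l.drop (t + 2) :=
      List.drop_eq_getElem_cons (by omega)
    have e1 : l[t]'(by omega) = g t := by simp [hl]
    have e2 : l[t + 1]'(by omega) = g (t + 1) := by simp [hl]
    conv_lhs => rw [← List.take_append_drop t l, hd1, hd2, e1, e2]

/-! ### The directed cycle -/

section DirCycle

variable {n : ℕ} [NeZero n]

/-- The directed cycle on `Fin n`. -/
def dirCycle (n : ℕ) [NeZero n] : Fin n → Fin n → Prop := fun u v => v = u + 1

lemma iterate_add_one (x : Fin n) (k : ℕ) :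
    (fun u : Fin n => u + 1)^[k] x = x + (k : Fin n) := by
  induction k with
  | zero => simp
  | succ k ih =>
    rw [Function.iterate_succ_apply', ih]
    push_cast
    ring

lemma dwalk_dirCycle_iff {x y : Fin n} {l : List (Fin n)} :
    DWalk (dirCycle n) x y l ↔
      ∃ k : ℕ, y = x + (k : Fin n) ∧
        l = (List.range (k + 1)).map (fun t : ℕ => x + (t : Fin n)) := by
  have hfun : (fun t : ℕ => (fun u : Fin n => u + 1)^[t] x) =
      fun t : ℕ => x + (t : Fin n) := by
    funext t
    exact iterate_add_one x t
  constructor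
  · intro h
    obtain ⟨k, hy, hl⟩ := dwalk_fun_inv (f := fun u => u + 1) h
    rw [hfun] at hl
    rw [iterate_add_one] at hy
    exact ⟨k, hy, hl⟩
  · rintro ⟨k, rfl, rfl⟩
    have h := dwalk_iterate (fun u : Fin n => u + 1) x k
    rw [iterate_add_one, hfun] at h
    exact h

lemma natCast_val_key {x y : Fin n} (k : ℕ) :
    y = x + (k : Fin n) ↔ k % n = (y - x).val := by
  constructor
  · rintro rfl
    rw [add_sub_cancel_left, Fin.val_natCast]
  · intro h
    have : ((k : ℕ) : Fin n) = y - x := by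
      rw [Fin.ext_iff, Fin.val_natCast, h]
    rw [this]
    ring

lemma isShortest_dirCycle_iff {x y : Fin n} {l : List (Fin n)} :
    IsShortest (dirCycle n) x y l ↔
      l = (List.range ((y - x).val + 1)).map (fun t : ℕ => x + (t : Fin n)) := by
  have hcan : DWalk (dirCycle n) x y
      ((List.range ((y - x).val + 1)).map (fun t : ℕ => x + (t : Fin n))) := by
    rw [dwalk_dirCycle_iff]
    refine ⟨(y - x).val, ?_, rfl⟩
    rw [Fin.cast_val_eq_self]
    ring
  constructor
  · rintro ⟨hw, hmin⟩
    obtain ⟨k, hy, hl⟩ := dwalk_dirCycle_iff.mp hw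
    have hk : k % n = (y - x).val := (natCast_val_key k).mp hy
    have h1 : (y - x).val ≤ k := hk ▸ Nat.mod_le k n
    have h2 := hmin _ hcan
    rw [hl] at h2 ⊢
    simp only [List.length_map, List.length_range] at h2
    have : k = (y - x).val := by omega
    rw [this]
  · rintro rfl
    refine ⟨hcan, fun l' hl' => ?_⟩
    obtain ⟨k, hy, hl⟩ := dwalk_dirCycle_iff.mp hl'
    have hk : k % n = (y - x).val := (natCast_val_key k).mp hy
    have h1 : (y - x).val ≤ k := hk ▸ Nat.mod_le k n
    rw [hl]
    simp only [List.length_map, List.length_range]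
    omega

end DirCycle

/-! ### Fin basics and cycle graph adjacency -/

open SimpleGraph

lemma mod_helper {x n : ℕ} (h2 : x < 2 * n) : x % n = if x < n then x else x - n := by
  split
  · exact Nat.mod_eq_of_lt ‹_›
  · rw [Nat.mod_eq_sub_mod (by omega), Nat.mod_eq_of_lt (by omega)]

lemma cycle_adj_fin {n : ℕ} [NeZero n] (hn : 2 ≤ n) {u v : Fin n} :
    (cycleGraph n).Adj u v ↔ (v = u + 1 ∨ u = v + 1) := by
  obtain ⟨m, rfl⟩ : ∃ m, n = m + 2 := ⟨n - 2, by omega⟩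
  rw [cycleGraph_adj]
  constructor
  · rintro (h | h)
    · rw [sub_eq_iff_eq_add] at h
      exact Or.inr (h.trans (add_comm 1 v))
    · rw [sub_eq_iff_eq_add] at h
      exact Or.inl (h.trans (add_comm 1 u))
  · rintro (rfl | rfl)
    · exact Or.inr (by simp)
    · exact Or.inl (by simp)

lemma val_add_one' {n : ℕ} [NeZero n] (hn : 2 ≤ n) (u : Fin n) :
    (u + 1).val = if u.val + 1 = n then 0 else u.val + 1 := by
  obtain ⟨m, rfl⟩ : ∃ m, n = m + 1 := ⟨n - 1, by omega⟩
  rw [Fin.val_add_one]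
  have h : (u = Fin.last m) ↔ (u.val + 1 = m + 1) := by
    rw [Fin.ext_iff, Fin.val_last]; omega
  by_cases h1 : u = Fin.last m
  · rw [if_pos h1, if_pos (h.mp h1)]
  · rw [if_neg h1, if_neg (fun hh => h1 (h.mpr hh))]

lemma cycle_adj_val {n : ℕ} [NeZero n] (hn : 2 ≤ n) {u v : Fin n} :
    (cycleGraph n).Adj u v ↔
      (u.val + 1 = v.val ∨ v.val + 1 = u.val ∨
        (u.val = 0 ∧ v.val + 1 = n) ∨ (v.val = 0 ∧ u.val + 1 = n)) := by
  have hu := u.isLt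
  have hv := v.isLt
  rw [cycle_adj_fin hn, Fin.ext_iff, Fin.ext_iff, val_add_one' hn, val_add_one' hn]
  split <;> split <;> omega

lemma val_one_of_le {n : ℕ} [NeZero n] (hn : 2 ≤ n) : (1 : Fin n).val = 1 := by
  rw [Fin.val_one']
  exact Nat.mod_eq_of_lt hn

lemma zero_ne_one_fin {n : ℕ} [NeZero n] (hn : 2 ≤ n) : (0 : Fin n) ≠ 1 := by
  rw [Fin.ext_iff.ne, val_one_of_le hn]
  simp

/-! ### mag of the directed cycle -/

section DirCycleMag

variable {n : ℕ} [NeZero n]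

lemma dirCycle_orientation (hn : 3 ≤ n) :
    IsOrientation (cycleGraph n) (dirCycle n) where
  adj_iff u v := by rw [cycle_adj_fin (by omega)]; exact Iff.rfl
  asymm u v h1 h2 := by
    have e1 : v.val = if u.val + 1 = n then 0 else u.val + 1 :=
      h1 ▸ val_add_one' (by omega) u
    have e2 : u.val = if v.val + 1 = n then 0 else v.val + 1 :=
      h2 ▸ val_add_one' (by omega) v
    have hu := u.isLt
    have hv := v.isLt
    split at e1 <;> split at e2 <;> omega

lemma neg_one_val {n : ℕ} [NeZero n] (hn : 2 ≤ n) : ((0 : Fin n) - 1).val = n - 1 := by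
  have h := val_add_one' hn (0 - 1)
  rw [sub_add_cancel] at h
  simp only [Fin.val_zero] at h
  split at h <;> omega

lemma mag_dirCycle (hn : 3 ≤ n) : mag (dirCycle n) = 2 := by
  have hne : ∀ u v : Fin n, dirCycle n u v → u ≠ v :=
    fun u v h => (dirCycle_orientation hn).ne h
  refine le_antisymm (Nat.sInf_le ?_) (two_le_mag hne ⟨0, 1, (zero_add 1).symm⟩)
  refine ⟨({0, 1} : Finset (Fin n)), ?_, ?_⟩
  swap
  · rw [Finset.card_insert_of_notMem (by simp [zero_ne_one_fin (by omega : 2 ≤ n)]),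
      Finset.card_singleton]
  intro a b hab
  have hb : b = a + 1 := hab
  subst hb
  by_cases ha : a = 0
  · subst ha
    refine ⟨0, by simp, 1, by simp, zero_ne_one_fin (by omega), Or.inl ⟨?_, ?_⟩⟩
    · exact ⟨_, isShortest_dirCycle_iff.mpr rfl⟩
    · intro l hl
      rw [isShortest_dirCycle_iff] at hl
      subst hl
      refine arcOn_map_range.mpr ⟨0, ?_, by simp, by simp⟩
      have : ((1 : Fin n) - 0).val = 1 := by
        rw [sub_zero, val_one_of_le (by omega)]
      omega
  · refine ⟨1, by simp, 0, by simp, fun h => ha ?_, Or.inl ⟨?_, ?_⟩⟩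
    · exact absurd h.symm (zero_ne_one_fin (by omega))
    · exact ⟨_, isShortest_dirCycle_iff.mpr rfl⟩
    · intro l hl
      rw [isShortest_dirCycle_iff] at hl
      subst hl
      refine arcOn_map_range.mpr ⟨(a - 1).val, ?_, ?_, ?_⟩
      · have h1 : ((0 : Fin n) - 1).val = n - 1 := neg_one_val (by omega)
        rw [h1]
        have h2 : (a - 1).val < n := (a - 1).isLt
        have h3 : (a - 1).val ≠ n - 1 := by
          intro hc
          apply ha
          have : a - 1 = (0 : Fin n) - 1 := by
            rw [Fin.ext_iff, hc, h1]
          have := congrArg (· + 1) this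
          simpa [sub_add_cancel] using this
        omega
      · rw [Fin.cast_val_eq_self, add_comm, sub_add_cancel]
      · push_cast
        rw [← add_assoc, add_comm 1 (a - 1), sub_add_cancel]

end DirCycleMag

lemma magMinus_cycle {n : ℕ} (hn : 3 ≤ n) : magMinus (cycleGraph n) = 2 := by
  haveI : NeZero n := ⟨by omega⟩
  apply le_antisymm
  · exact Nat.sInf_le ⟨dirCycle n, dirCycle_orientation hn, mag_dirCycle hn⟩
  · refine le_csInf ⟨2, dirCycle n, dirCycle_orientation hn, mag_dirCycle hn⟩ ?_
    rintro k ⟨A, hA, rfl⟩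
    apply two_le_mag (fun u v h => hA.ne h)
    have hadj : (cycleGraph n).Adj 0 1 :=
      (cycle_adj_fin (by omega)).mpr (Or.inl (zero_add 1).symm)
    rcases (hA.adj_iff 0 1).mp hadj with h | h
    exacts [⟨0, 1, h⟩, ⟨1, 0, h⟩]

/-! ### The alternating orientation for even cycles -/

section EvenCase

variable {n : ℕ} [NeZero n]

/-- Orientation of the cycle where all arcs go from even to odd vertices. -/
def evenOrient (n : ℕ) [NeZero n] : Fin n → Fin n → Prop :=
  fun i j => (cycleGraph n).Adj i j ∧ Even i.val ∧ ¬ Even j.val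

lemma even_adj_parity (hn : 2 ≤ n) (hpar : Even n) {u v : Fin n}
    (h : (cycleGraph n).Adj u v) : (Even u.val ↔ ¬ Even v.val) := by
  rw [cycle_adj_val hn] at h
  rw [Nat.even_iff] at hpar ⊢
  rw [Nat.even_iff]
  have hu := u.isLt
  have hv := v.isLt
  omega

lemma evenOrient_orientation (hn : 4 ≤ n) (hpar : Even n) :
    IsOrientation (cycleGraph n) (evenOrient n) where
  adj_iff u v := by
    constructor
    · intro h
      by_cases he : Even u.val
      · exact Or.inl ⟨h, he, (even_adj_parity (by omega) hpar h).mp he⟩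
      · have := (even_adj_parity (by omega) hpar h.symm).mpr
        exact Or.inr ⟨h.symm, by tauto, he⟩
    · rintro (⟨h, -⟩ | ⟨h, -⟩)
      exacts [h, h.symm]
  asymm u v h1 h2 := h2.2.2 h1.2.1

lemma evenOrient_sink : ∀ u v : Fin n, evenOrient n u v → IsSink (evenOrient n) v :=
  fun _ v h w hvw => h.2.2 hvw.2.1

lemma mag_evenOrient (hn : 4 ≤ n) (hpar : Even n) : mag (evenOrient n) = n := by
  have hne : ∀ u v : Fin n, evenOrient n u v → u ≠ v :=
    fun u v h => (evenOrient_orientation hn hpar).ne h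
  refine le_antisymm (by simpa using mag_le_card hne) ?_
  refine le_csInf (magSet_nonempty hne) ?_
  rintro k ⟨M, hM, rfl⟩
  have hall : ∀ v : Fin n, v ∈ M := by
    intro v
    have hv := v.isLt
    by_cases he : Even v.val
    · -- arc (v, v+1)
      have hval : (v + 1).val = v.val + 1 := by
        rw [val_add_one' (by omega)]
        rw [Nat.even_iff] at he hpar
        split <;> omega
      have harc : evenOrient n v (v + 1) := by
        refine ⟨(cycle_adj_fin (by omega)).mpr (Or.inl rfl), he, ?_⟩
        rw [hval, Nat.even_iff] at *
        omega
      obtain ⟨x, hx, y, hy, -, hmon⟩ := hM _ _ harc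
      rcases monitors_eq_of_sink evenOrient_sink hmon with ⟨rfl, rfl⟩ | ⟨rfl, rfl⟩
      exacts [hx, hy]
    · -- arc (v+1, v)
      have hval : Even (v + 1).val := by
        rw [val_add_one' (by omega)]
        rw [Nat.even_iff] at hpar ⊢
        rw [Nat.even_iff] at he
        split <;> omega
      have harc : evenOrient n (v + 1) v :=
        ⟨(cycle_adj_fin (by omega)).mpr (Or.inr rfl), hval, he⟩
      obtain ⟨x, hx, y, hy, -, hmon⟩ := hM _ _ harc
      rcases monitors_eq_of_sink evenOrient_sink hmon with ⟨rfl, rfl⟩ | ⟨rfl, rfl⟩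
      exacts [hy, hx]
  have : M = Finset.univ := Finset.eq_univ_iff_forall.mpr hall
  rw [this, Finset.card_univ, Fintype.card_fin]

end EvenCase

lemma magPlus_cycle_even {n : ℕ} (hn : 4 ≤ n) (hpar : Even n) :
    magPlus (cycleGraph n) = n := by
  haveI : NeZero n := ⟨by omega⟩
  have hbdd : ∀ k ∈ {k | ∃ A : Fin n → Fin n → Prop,
      IsOrientation (cycleGraph n) A ∧ mag A = k}, k ≤ n := by
    rintro k ⟨A, hA, rfl⟩
    simpa using mag_le_card (fun u v h => hA.ne h)
  have hmem : n ∈ {k | ∃ A : Fin n → Fin n → Prop,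
      IsOrientation (cycleGraph n) A ∧ mag A = k} :=
    ⟨evenOrient n, evenOrient_orientation hn hpar, mag_evenOrient hn hpar⟩
  exact le_antisymm (csSup_le ⟨n, hmem⟩ hbdd) (le_csSup ⟨n, hbdd⟩ hmem)

/-! ### Odd cycles: upper bound for every orientation -/

section OddUpper

variable {n : ℕ} [NeZero n] {B : Fin n → Fin n → Prop}

lemma val_sub_one {n : ℕ} [NeZero n] (hn : 2 ≤ n) (b : Fin n) :
    (b - 1).val = if b.val = 0 then n - 1 else b.val - 1 := by
  have h := val_add_one' hn (b - 1)
  rw [sub_add_cancel] at h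
  have h2 := (b - 1).isLt
  have h3 := b.isLt
  split at h <;> split <;> omega

lemma sub_one_ne_add_one (hn : 3 ≤ n) (b : Fin n) : b - 1 ≠ b + 1 := by
  intro h
  rw [Fin.ext_iff, val_sub_one (by omega), val_add_one' (by omega)] at h
  have := b.isLt
  split at h <;> split at h <;> omega

lemma exists_passthrough (hn : 3 ≤ n) (hodd : Odd n)
    (hA : IsOrientation (cycleGraph n) B) :
    ∃ b : Fin n, (B (b - 1) b ∧ B b (b + 1)) ∨ (B (b + 1) b ∧ B b (b - 1)) := by
  by_contra h
  have hedge : ∀ i : Fin n, B i (i + 1) ∨ B (i + 1) i := fun i =>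
    (hA.adj_iff i (i + 1)).mp ((cycle_adj_fin (by omega)).mpr (Or.inl rfl))
  have hstep : ∀ i : Fin n, (B (i + 1) (i + 1 + 1) ↔ ¬ B i (i + 1)) := by
    intro i
    have hb := (not_exists.mp h) (i + 1)
    rw [add_sub_cancel_right] at hb
    have hP : ¬ (B i (i + 1) ∧ B (i + 1) (i + 1 + 1)) := fun hp => hb (Or.inl hp)
    have hQ : ¬ (B (i + 1 + 1) (i + 1) ∧ B (i + 1) i) := fun hq => hb (Or.inr hq)
    constructor
    · exact fun h1 h2 => hP ⟨h2, h1⟩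
    · intro h1
      rcases hedge i with h2 | h2
      · exact absurd h2 h1
      rcases hedge (i + 1) with h3 | h3
      · exact h3
      · exact absurd ⟨h3, h2⟩ hQ
  have key : ∀ k : ℕ, (B (k : Fin n) ((k : Fin n) + 1) ↔ (Even k ↔ B 0 1)) := by
    intro k
    induction k with
    | zero =>
      simp only [Nat.cast_zero, zero_add]
      have h0 : Even 0 := Even.zero
      tauto
    | succ k ih =>
      have hc : ((k + 1 : ℕ) : Fin n) = (k : Fin n) + 1 := by push_cast; ring
      rw [hc, hstep (k : Fin n), Nat.even_add_one]
      tauto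
  have hcontr := key n
  rw [Fin.natCast_self, zero_add] at hcontr
  have hne : ¬ Even n := Nat.not_even_iff_odd.mpr hodd
  tauto

lemma mag_le_of_passthrough (hn : 5 ≤ n) (hA : IsOrientation (cycleGraph n) B)
    {b c d : Fin n} (hcb : B c b) (hbd : B b d)
    (hc : c = b - 1 ∨ c = b + 1) (hd : d = b - 1 ∨ d = b + 1) (hne : c ≠ d) :
    mag B ≤ n - 1 := by
  have hb := b.isLt
  have hv1 : (b + 1).val = if b.val + 1 = n then 0 else b.val + 1 :=
    val_add_one' (by omega) b
  have hv2 : (b - 1).val = if b.val = 0 then n - 1 else b.val - 1 :=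
    val_sub_one (by omega) b
  -- b is not one of its neighbours
  have hbc : b ≠ c := by
    intro hh
    rcases hc with rfl | rfl
    · rw [Fin.ext_iff, hv2] at hh; split at hh <;> omega
    · rw [Fin.ext_iff, hv1] at hh; split at hh <;> omega
  have hbd' : b ≠ d := by
    intro hh
    rcases hd with rfl | rfl
    · rw [Fin.ext_iff, hv2] at hh; split at hh <;> omega
    · rw [Fin.ext_iff, hv1] at hh; split at hh <;> omega
  -- c and d are not adjacent
  have hnadj : ¬ (cycleGraph n).Adj c d := by
    intro hadj
    rw [cycle_adj_val (by omega)] at hadj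
    rcases hc with rfl | rfl <;> rcases hd with rfl | rfl <;>
      first
        | exact hne rfl
        | (split at hv1 <;> split at hv2 <;> omega)
  have hncd : ¬ B c d := fun hh => hnadj ((hA.adj_iff c d).mpr (Or.inl hh))
  -- the middle vertex of a 2-step walk from c to d must be b
  have hmid : ∀ x, B c x → B x d → x = b := by
    intro x h1 h2
    have a1 := (hA.adj_iff c x).mpr (Or.inl h1)
    have a2 := (hA.adj_iff x d).mpr (Or.inl h2)
    rw [cycle_adj_val (by omega)] at a1 a2
    have hx := x.isLt
    rw [Fin.ext_iff]
    rcases hc with rfl | rfl <;> rcases hd with rfl | rfl <;>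
      (split at hv1 <;> split at hv2 <;> omega)
  -- only arcs at b are c → b and b → d
  have hinb : ∀ u, B u b → u = c := by
    intro u h1
    have a1 := (hA.adj_iff u b).mpr (Or.inl h1)
    rw [cycle_adj_fin (by omega)] at a1
    have hu : u = b - 1 ∨ u = b + 1 := by
      rcases a1 with a1 | a1
      · left; rw [eq_sub_iff_add_eq]; exact a1.symm
      · right; exact a1
    have hud : u ≠ d := by
      rintro rfl
      exact hA.asymm b u hbd h1
    rcases hc with rfl | rfl <;> rcases hd with rfl | rfl <;> tauto
  have houtb : ∀ v, B b v → v = d := by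
    intro v h1
    have a1 := (hA.adj_iff b v).mpr (Or.inl h1)
    rw [cycle_adj_fin (by omega)] at a1
    have hv : v = b - 1 ∨ v = b + 1 := by
      rcases a1 with a1 | a1
      · right; exact a1
      · left; rw [eq_sub_iff_add_eq]; exact a1.symm
    have hvc : v ≠ c := by
      rintro rfl
      exact hA.asymm b v h1 hcb
    rcases hc with rfl | rfl <;> rcases hd with rfl | rfl <;> tauto
  -- the canonical walk c → b → d and minimality
  have w0 : DWalk B c d [c, b, d] := .cons hcb (.cons hbd (.nil d))
  have min3 : ∀ l, DWalk B c d l → 3 ≤ l.length := by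
    intro l hl
    have h2 := hl.two_le_length hne
    rcases Nat.lt_or_ge l.length 3 with hlt | hge
    · have : l.length = 2 := by omega
      exact absurd (dwalk_length_two hl this).2 hncd
    · exact hge
  have hshort : IsShortest B c d [c, b, d] := ⟨w0, fun l' h => min3 l' h⟩
  have huniq : ∀ l, IsShortest B c d l → l = [c, b, d] := by
    intro l hl
    have h3 : l.length = 3 := le_antisymm (hl.2 _ w0) (min3 l hl.1)
    obtain ⟨w, rfl, hcw, hwd⟩ := dwalk_length_three hl.1 h3
    rw [hmid w hcw hwd]
  -- the monitoring set: everything except b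
  refine Nat.sInf_le ⟨Finset.univ.erase b, ?_, ?_⟩
  swap
  · rw [Finset.card_erase_of_mem (Finset.mem_univ b), Finset.card_univ,
      Fintype.card_fin]
  intro u v huv
  have hMc : c ∈ (Finset.univ.erase b : Finset (Fin n)) :=
    Finset.mem_erase.mpr ⟨fun hh => hbc hh.symm, Finset.mem_univ c⟩
  have hMd : d ∈ (Finset.univ.erase b : Finset (Fin n)) :=
    Finset.mem_erase.mpr ⟨fun hh => hbd' hh.symm, Finset.mem_univ d⟩
  have hmoncd : ∀ a₁ b₁ : Fin n, ArcOn a₁ b₁ [c, b, d] → Monitors B c d a₁ b₁ := by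
    intro a₁ b₁ harc
    left
    refine ⟨⟨_, hshort⟩, fun l hl => ?_⟩
    rw [huniq l hl]
    exact harc
  by_cases hub : u = b
  · subst hub
    rw [houtb v huv]
    exact ⟨c, hMc, d, hMd, hne, hmoncd _ _ ⟨[c], [], rfl⟩⟩
  · by_cases hvb : v = b
    · subst hvb
      rw [hinb u huv]
      exact ⟨c, hMc, d, hMd, hne, hmoncd _ _ ⟨[], [d], rfl⟩⟩
    · refine ⟨u, Finset.mem_erase.mpr ⟨hub, Finset.mem_univ u⟩,
        v, Finset.mem_erase.mpr ⟨hvb, Finset.mem_univ v⟩,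
        hA.ne huv, monitors_self huv (hA.ne huv)⟩

lemma mag_le_odd (hn : 5 ≤ n) (hodd : Odd n)
    (hA : IsOrientation (cycleGraph n) B) : mag B ≤ n - 1 := by
  obtain ⟨b, hpass | hpass⟩ := exists_passthrough (by omega) hodd hA
  · exact mag_le_of_passthrough hn hA hpass.1 hpass.2 (Or.inl rfl) (Or.inr rfl)
      (sub_one_ne_add_one (by omega) b)
  · exact mag_le_of_passthrough hn hA hpass.1 hpass.2 (Or.inr rfl) (Or.inl rfl)
      fun hh => (sub_one_ne_add_one (by omega) b) hh.symm

end OddUpper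

/-! ### The extremal orientation for odd cycles -/

section OddConstruction

variable {n : ℕ} [NeZero n]

/-- Orientation of the odd cycle: arcs from even to odd vertices, plus the
arc from `n-1` to `0`. -/
def oddOrient (n : ℕ) [NeZero n] : Fin n → Fin n → Prop :=
  fun i j => (cycleGraph n).Adj i j ∧
    ((Even i.val ∧ ¬ Even j.val) ∨ (i.val = n - 1 ∧ j.val = 0))

lemma oddOrient_orientation (hn : 5 ≤ n) (hodd : Odd n) :
    IsOrientation (cycleGraph n) (oddOrient n) where
  adj_iff u v := by
    constructor
    · intro h
      have hval := (cycle_adj_val (by omega)).mp h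
      have hu := u.isLt
      have hv := v.isLt
      have hodd' := Nat.odd_iff.mp hodd
      by_cases heu : Even u.val
      · by_cases hev : Even v.val
        · rw [Nat.even_iff] at heu hev
          rcases hval with h1 | h1 | h1 | h1
          · omega
          · omega
          · exact Or.inr ⟨h.symm, Or.inr ⟨by omega, by omega⟩⟩
          · exact Or.inl ⟨h, Or.inr ⟨by omega, by omega⟩⟩
        · exact Or.inl ⟨h, Or.inl ⟨heu, hev⟩⟩
      · have hev : Even v.val := by
          rw [Nat.even_iff] at heu ⊢
          rcases hval with h1 | h1 | h1 | h1 <;> omega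
        exact Or.inr ⟨h.symm, Or.inl ⟨hev, heu⟩⟩
    · rintro (⟨h, -⟩ | ⟨h, -⟩)
      exacts [h, h.symm]
  asymm u v h1 h2 := by
    obtain ⟨-, c1⟩ := h1
    obtain ⟨-, c2⟩ := h2
    have hu := u.isLt
    have hv := v.isLt
    have hodd' := Nat.odd_iff.mp hodd
    rcases c1 with ⟨e1, e2⟩ | ⟨e1, e2⟩ <;> rcases c2 with ⟨f1, f2⟩ | ⟨f1, f2⟩
    · exact e2 f1
    · rw [Nat.even_iff] at e2
      omega
    · rw [Nat.even_iff] at f2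
      omega
    · omega

lemma oddOrient_hs (hn : 5 ≤ n) (hodd : Odd n) :
    ∀ u v : Fin n, oddOrient n u v → v = 0 ∨ IsSink (oddOrient n) v := by
  rintro u v ⟨-, hc⟩
  have hodd' := Nat.odd_iff.mp hodd
  rcases hc with ⟨-, hev⟩ | ⟨-, h0⟩
  · right
    rintro w ⟨-, hc2⟩
    rcases hc2 with ⟨he, -⟩ | ⟨he, -⟩
    · exact hev he
    · refine hev ?_
      rw [he, Nat.even_iff]
      omega
  · left
    exact Fin.ext (by rw [h0, Fin.val_zero])

lemma oddOrient_hst (hn : 5 ≤ n) (hodd : Odd n) :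
    ∀ v : Fin n, oddOrient n 0 v → v = 1 := by
  rintro v ⟨hadj, hc⟩
  have hval := (cycle_adj_val (by omega)).mp hadj
  simp only [Fin.val_zero] at hval
  have hv := v.isLt
  have hodd' := Nat.odd_iff.mp hodd
  rcases hc with ⟨-, hev⟩ | ⟨h0, -⟩
  · rw [Nat.even_iff] at hev
    have h1 : v.val = 1 := by rcases hval with h | h | h | h <;> omega
    exact Fin.ext (by rw [h1, val_one_of_le (by omega : 2 ≤ n)])
  · rw [Fin.val_zero] at h0
    omega

lemma oddOrient_ht (hn : 5 ≤ n) : IsSink (oddOrient n) 1 := by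
  rintro w ⟨-, hc⟩
  rcases hc with ⟨he, -⟩ | ⟨he, -⟩ <;>
    rw [val_one_of_le (by omega : 2 ≤ n)] at he
  · rw [Nat.even_iff] at he
    omega
  · omega

lemma oddOrient_monitors (hn : 5 ≤ n) (hodd : Odd n) {a b x y : Fin n}
    (h1 : ¬ (a.val = n - 1 ∧ b.val = 0)) (h2 : ¬ (a.val = 0 ∧ b.val = 1))
    (hmon : Monitors (oddOrient n) x y a b) :
    (x = a ∧ y = b) ∨ (x = b ∧ y = a) := by
  refine monitors_cases (fun p q hpq => ?_) hmon
  obtain ⟨⟨l, hl⟩, hall⟩ := hpq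
  have harc := hall l hl
  rcases dwalk_almost_sink (oddOrient_hs hn hodd) (oddOrient_hst hn hodd)
      (oddOrient_ht hn) hl.1 with
    ⟨rfl, rfl⟩ | ⟨hpq', rfl⟩ | ⟨hp0, rfl, rfl⟩
  · exact absurd harc not_arcOn_singleton
  · obtain ⟨rfl, rfl⟩ := arcOn_pair harc
    exact ⟨rfl, rfl⟩
  · exfalso
    rcases arcOn_triple harc with ⟨rfl, rfl⟩ | ⟨rfl, rfl⟩
    · apply h1
      obtain ⟨-, hc⟩ := hp0
      rcases hc with ⟨-, hev⟩ | ⟨hpv, -⟩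
      · exact absurd (by rw [Fin.val_zero]; exact Even.zero) hev
      · exact ⟨hpv, Fin.val_zero _⟩
    · exact h2 ⟨Fin.val_zero _, val_one_of_le (by omega : 2 ≤ n)⟩

lemma mag_oddOrient (hn : 5 ≤ n) (hodd : Odd n) :
    mag (oddOrient n) = n - 1 := by
  have hA := oddOrient_orientation hn hodd
  have hne : ∀ u v : Fin n, oddOrient n u v → u ≠ v := fun u v h => hA.ne h
  refine le_antisymm (mag_le_odd hn hodd hA) ?_
  refine le_csInf (magSet_nonempty hne) ?_
  rintro k ⟨M, hM, rfl⟩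
  have hodd' := Nat.odd_iff.mp hodd
  have hforced : ∀ v : Fin n, v.val ≠ 0 → v ∈ M := by
    intro v hv0
    have hv := v.isLt
    by_cases hev : Even v.val
    · -- use the arc (v, v - 1)
      have hev' := Nat.even_iff.mp hev
      have hw : (v - 1).val = v.val - 1 := by
        rw [val_sub_one (by omega), if_neg hv0]
      have hadj : (cycleGraph n).Adj v (v - 1) := by
        rw [cycle_adj_fin (by omega)]
        right
        rw [sub_add_cancel]
      have harc : oddOrient n v (v - 1) := by
        refine ⟨hadj, Or.inl ⟨hev, ?_⟩⟩
        rw [hw, Nat.even_iff]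
        omega
      obtain ⟨x, hx, y, hy, -, hmon⟩ := hM _ _ harc
      have hcl := oddOrient_monitors hn hodd
        (by rw [hw]; omega) (by rw [hw]; omega) hmon
      rcases hcl with ⟨rfl, rfl⟩ | ⟨rfl, rfl⟩
      exacts [hx, hy]
    · -- use the arc (v + 1, v)
      have hev' : v.val % 2 = 1 := by
        rw [Nat.even_iff] at hev
        omega
      have hw : (v + 1).val = v.val + 1 := by
        rw [val_add_one' (by omega), if_neg (by omega)]
      have hadj : (cycleGraph n).Adj (v + 1) v := by
        rw [cycle_adj_fin (by omega)]
        right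
        rfl
      have harc : oddOrient n (v + 1) v := by
        refine ⟨hadj, Or.inl ⟨?_, hev⟩⟩
        rw [hw, Nat.even_iff]
        omega
      obtain ⟨x, hx, y, hy, -, hmon⟩ := hM _ _ harc
      have hcl := oddOrient_monitors hn hodd
        (by rw [hw]; omega) (by rw [hw]; omega) hmon
      rcases hcl with ⟨rfl, rfl⟩ | ⟨rfl, rfl⟩
      exacts [hy, hx]
  have hsub : Finset.univ.erase (0 : Fin n) ⊆ M := by
    intro x hx
    refine hforced x (fun hc => (Finset.mem_erase.mp hx).1 ?_)
    exact Fin.ext (by rw [hc, Fin.val_zero])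
  calc n - 1 = (Finset.univ.erase (0 : Fin n)).card := by
        rw [Finset.card_erase_of_mem (Finset.mem_univ _), Finset.card_univ,
          Fintype.card_fin]
    _ ≤ M.card := Finset.card_le_card hsub

end OddConstruction

lemma magPlus_cycle_odd {n : ℕ} (hn : 5 ≤ n) (hodd : Odd n) :
    magPlus (cycleGraph n) = n - 1 := by
  haveI : NeZero n := ⟨by omega⟩
  have hbdd : ∀ k ∈ {k | ∃ A : Fin n → Fin n → Prop,
      IsOrientation (cycleGraph n) A ∧ mag A = k}, k ≤ n - 1 := by
    rintro k ⟨A, hA, rfl⟩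
    exact mag_le_odd hn hodd hA
  have hmem : n - 1 ∈ {k | ∃ A : Fin n → Fin n → Prop,
      IsOrientation (cycleGraph n) A ∧ mag A = k} :=
    ⟨oddOrient n, oddOrient_orientation hn hodd, mag_oddOrient hn hodd⟩
  exact le_antisymm (csSup_le ⟨n - 1, hmem⟩ hbdd) (le_csSup ⟨n - 1, hbdd⟩ hmem)

/-! ### The triangle -/

/-- The transitive tournament orientation of the triangle. -/
abbrev c3Orient : Fin 3 → Fin 3 → Prop :=
  fun i j => (i = 2 ∧ j = 0) ∨ (i = 0 ∧ j = 1) ∨ (i = 2 ∧ j = 1)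

lemma c3_orientation : IsOrientation (cycleGraph 3) c3Orient where
  adj_iff := by decide
  asymm := by decide

lemma c3_walk_21 : DWalk c3Orient 2 1 [2, 1] :=
  .cons (Or.inr (Or.inr ⟨rfl, rfl⟩)) (.nil 1)

lemma c3_monitors {a b x y : Fin 3} (hmon : Monitors c3Orient x y a b) :
    (x = a ∧ y = b) ∨ (x = b ∧ y = a) := by
  refine monitors_cases (fun p q hpq => ?_) hmon
  obtain ⟨⟨l, hl⟩, hall⟩ := hpq
  have harc := hall l hl
  have hs : ∀ u v : Fin 3, c3Orient u v → v = 0 ∨ IsSink c3Orient v := by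
    unfold IsSink; decide
  have hst : ∀ v : Fin 3, c3Orient 0 v → v = 1 := by decide
  have ht : IsSink c3Orient 1 := by unfold IsSink; decide
  rcases dwalk_almost_sink hs hst ht hl.1 with
    ⟨rfl, rfl⟩ | ⟨hpq', rfl⟩ | ⟨hp0, rfl, rfl⟩
  · exact absurd harc not_arcOn_singleton
  · obtain ⟨rfl, rfl⟩ := arcOn_pair harc
    exact ⟨rfl, rfl⟩
  · exfalso
    have hp2 : p = 2 := by
      rcases hp0 with ⟨h, -⟩ | ⟨-, h⟩ | ⟨-, h⟩
      · exact h
      · exact absurd h (by decide)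
      · exact absurd h (by decide)
    subst hp2
    have := hl.2 _ c3_walk_21
    simp at this

lemma mag_c3 : mag c3Orient = 3 := by
  have hne : ∀ u v : Fin 3, c3Orient u v → u ≠ v := fun u v h => c3_orientation.ne h
  refine le_antisymm (by simpa using mag_le_card hne) ?_
  refine le_csInf (magSet_nonempty hne) ?_
  rintro k ⟨M, hM, rfl⟩
  have harc20 : c3Orient 2 0 := Or.inl ⟨rfl, rfl⟩
  have harc01 : c3Orient 0 1 := Or.inr (Or.inl ⟨rfl, rfl⟩)
  have hall : ∀ v : Fin 3, v ∈ M := by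
    intro v
    fin_cases v
    · obtain ⟨x, hx, y, hy, -, hmon⟩ := hM _ _ harc20
      rcases c3_monitors hmon with ⟨rfl, rfl⟩ | ⟨rfl, rfl⟩
      exacts [hy, hx]
    · obtain ⟨x, hx, y, hy, -, hmon⟩ := hM _ _ harc01
      rcases c3_monitors hmon with ⟨rfl, rfl⟩ | ⟨rfl, rfl⟩
      exacts [hy, hx]
    · obtain ⟨x, hx, y, hy, -, hmon⟩ := hM _ _ harc20
      rcases c3_monitors hmon with ⟨rfl, rfl⟩ | ⟨rfl, rfl⟩
      exacts [hx, hy]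
  have : M = Finset.univ := Finset.eq_univ_iff_forall.mpr hall
  rw [this, Finset.card_univ, Fintype.card_fin]

lemma magPlus_c3 : magPlus (cycleGraph 3) = 3 := by
  have hbdd : ∀ k ∈ {k | ∃ A : Fin 3 → Fin 3 → Prop,
      IsOrientation (cycleGraph 3) A ∧ mag A = k}, k ≤ 3 := by
    rintro k ⟨A, hA, rfl⟩
    simpa using mag_le_card (fun u v h => hA.ne h)
  have hmem : 3 ∈ {k | ∃ A : Fin 3 → Fin 3 → Prop,
      IsOrientation (cycleGraph 3) A ∧ mag A = k} :=
    ⟨c3Orient, c3_orientation, mag_c3⟩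
  exact le_antisymm (csSup_le ⟨3, hmem⟩ hbdd) (le_csSup ⟨3, hbdd⟩ hmem)

/-! ### Main theorem -/

theorem cycle_magPlus_magMinus' :
    (∀ n : ℕ, 4 ≤ n → Odd n →
      magPlus (SimpleGraph.cycleGraph n) = n - 1) ∧
    (∀ n : ℕ, 4 ≤ n → Even n →
      magPlus (SimpleGraph.cycleGraph n) = n) ∧
    magPlus (SimpleGraph.cycleGraph 3) = 3 ∧
    (∀ n : ℕ, 3 ≤ n → magMinus (SimpleGraph.cycleGraph n) = 2) := by
  refine ⟨fun n hn hodd => ?_, fun n hn heven => magPlus_cycle_even hn heven,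
    magPlus_c3, fun n hn => magMinus_cycle hn⟩
  have h5 : 5 ≤ n := by
    rcases hodd with ⟨k, rfl⟩
    omega
  exact magPlus_cycle_odd h5 hodd


/-- values of `mag⁺` and `mag⁻` for cycles:
`mag⁺(C_n) = n - 1` for odd `n ≥ 4`, `mag⁺(C_n) = n` for even `n ≥ 4`,
`mag⁺(C_3) = 3`, and `mag⁻(C_n) = 2` for all `n ≥ 3`. -/
theorem cycle_magPlus_magMinus :
    (∀ n : ℕ, 4 ≤ n → Odd n →
      magPlus (SimpleGraph.cycleGraph n) = n - 1) ∧
    (∀ n : ℕ, 4 ≤ n → Even n →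
      magPlus (SimpleGraph.cycleGraph n) = n) ∧
    magPlus (SimpleGraph.cycleGraph 3) = 3 ∧
    (∀ n : ℕ, 3 ≤ n → magMinus (SimpleGraph.cycleGraph n) = 2) :=
  cycle_magPlus_magMinus'

end MAG
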